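/- Let Ω ⊆ ℕ be a finite index set with |Ω| = M, and suppose the elements of 𝒟 = {m₁ − m₂ : m₁, m₂ ∈ Ω, m₁ ≥ m₂} have a common divisor b ≥ 2. Then there exist distinct frequencies f₁, f₂ ∈ [0,1) such that the vectors a_Ω(f₁) and a_Ω(f₂) are linearly dependent; concretely, if f₁ = f₂ + 1/b (mod 1), then a_Ω(f₁) = e^{i2π Ω₁/b} a_Ω(f₂), where Ω₁ = min Ω. -/

import Mathlib

/-- If the differences of elements of `Ω` all share a common divisor `b ≥ 2`, then the
frequencies `f₁ = f₂ + 1/b (mod 1)` and `f₂` are distinct and give linearly dependent atoms: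
concretely `a_Ω(f₁) = e^{i2π Ω₁/b} a_Ω(f₂)` where `Ω₁ = min Ω`. -/
theorem stmt4 (Ω : Finset ℕ) (hne : Ω.Nonempty) (b : ℕ) (hb : 2 ≤ b)
    (hdvd : ∀ m₁ ∈ Ω, ∀ m₂ ∈ Ω, m₂ ≤ m₁ → (b : ℤ) ∣ ((m₁ : ℤ) - (m₂ : ℤ)))
    (f₂ : ℝ) (hf₂ : f₂ ∈ Set.Ico (0 : ℝ) 1)
    (f₁ : ℝ) (hf₁ : f₁ = Int.fract (f₂ + 1 / (b : ℝ))) :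
    f₁ ≠ f₂ ∧ f₁ ∈ Set.Ico (0 : ℝ) 1 ∧
    ∀ j ∈ Ω,
      Complex.exp (2 * Real.pi * Complex.I * (j : ℂ) * (f₁ : ℂ))
        = Complex.exp (2 * Real.pi * Complex.I * ((Ω.min' hne : ℕ) : ℂ) / (b : ℂ))
          * Complex.exp (2 * Real.pi * Complex.I * (j : ℂ) * (f₂ : ℂ)) := by
  have hb0R : (0 : ℝ) < b := by positivity
  have hb1R : (1 : ℝ) < b := by exact_mod_cast Nat.lt_of_lt_of_le one_lt_two hb
  have hinvpos : (0 : ℝ) < 1 / b := by positivity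
  have hinvlt : (1 : ℝ) / b < 1 := by
    rw [div_lt_one hb0R]; exact hb1R
  set k : ℤ := ⌊f₂ + 1 / (b : ℝ)⌋ with hk
  have hf₁' : f₁ = f₂ + 1 / b - k := by
    rw [hf₁, Int.fract]
  refine ⟨?_, ?_, ?_⟩
  · intro h
    have hkeq : (k : ℝ) = 1 / b := by linarith [hf₁'.symm.trans h]
    have h0k : (0 : ℤ) < k := by exact_mod_cast hkeq ▸ hinvpos
    have h1k : k < 1 := by exact_mod_cast hkeq ▸ hinvlt
    omega
  · rw [hf₁]; exact ⟨Int.fract_nonneg _, Int.fract_lt_one _⟩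
  · intro j hj
    set m : ℕ := Ω.min' hne with hm
    have hmj : m ≤ j := Ω.min'_le j hj
    obtain ⟨t, ht⟩ := hdvd j hj m (Ω.min'_mem hne) hmj
    have hjC : (j : ℂ) = m + b * t := by
      have : ((j : ℤ) : ℂ) = ((m : ℤ) : ℂ) + ((b : ℤ) : ℂ) * ((t : ℤ) : ℂ) := by
        exact_mod_cast congrArg (fun z : ℤ => (z : ℂ)) (by linarith [ht] : (j : ℤ) = m + b * t)
      push_cast at this ⊢
      exact this
    have hbC : (b : ℂ) ≠ 0 := by
      exact_mod_cast (by omega : b ≠ 0)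
    have hf₁C : (f₁ : ℂ) = (f₂ : ℂ) + 1 / (b : ℂ) - (k : ℂ) := by
      rw [hf₁']; push_cast; ring
    have key : 2 * (Real.pi : ℂ) * Complex.I * (j : ℂ) * (f₁ : ℂ)
        = (2 * (Real.pi : ℂ) * Complex.I * (m : ℂ) / (b : ℂ)
            + 2 * (Real.pi : ℂ) * Complex.I * (j : ℂ) * (f₂ : ℂ))
          + ((t - j * k : ℤ) : ℂ) * (2 * (Real.pi : ℂ) * Complex.I) := by
      rw [hf₁C]
      push_cast
      field_simp
      linear_combination hjC
    rw [key, Complex.exp_add, Complex.exp_int_mul_two_pi_mul_I, mul_one, Complex.exp_add]
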